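/- The number of interval-closed sets of the product of chains [2] × [n] is 1 + n + n² + ((n+1)/2)·binomial(n+2, 3), which equals (n⁴ + 4n³ + 17n² + 14n + 12)/12. -/

import Mathlib

open Finset

def W2 (n : ℕ) : ℕ := ∑ i ∈ range n, (i + 1)
def W3 (n : ℕ) : ℕ := ∑ i ∈ range n, W2 (i + 1)
def W4 (n : ℕ) : ℕ := ∑ i ∈ range n, W3 (i + 1)
def S4' (n : ℕ) : ℕ := ∑ i ∈ range n, W3 i

lemma sum_if_const {α : Type*} {P : Prop} [Decidable P] (s : Finset α) (f : α → ℕ) :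
    ∑ x ∈ s, (if P then f x else 0) = if P then ∑ x ∈ s, f x else 0 := by
  split <;> simp

lemma sum_Iic {n : ℕ} (b : Fin n) (f : ℕ → ℕ) :
    ∑ a ∈ Iic b, f ↑a = ∑ i ∈ range (↑b + 1), f i := by
  refine Finset.sum_bij' (fun a _ => (a : ℕ))
    (fun i hi => ⟨i, lt_of_lt_of_le (mem_range.mp hi) b.isLt⟩) ?_ ?_ ?_ ?_ ?_
  · intro a ha
    rw [mem_range, Nat.lt_succ_iff]
    exact Fin.le_def.mp (mem_Iic.mp ha)
  · intro i hi
    rw [mem_Iic]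
    exact Fin.le_def.mpr (Nat.lt_succ_iff.mp (mem_range.mp hi))
  · intro a ha; rfl
  · intro i hi; rfl
  · intro a ha; rfl

lemma sum_Iio {n : ℕ} (b : Fin n) (f : ℕ → ℕ) :
    ∑ a ∈ Iio b, f ↑a = ∑ i ∈ range ↑b, f i := by
  refine Finset.sum_bij' (fun a _ => (a : ℕ))
    (fun i hi => ⟨i, lt_trans (mem_range.mp hi) b.isLt⟩) ?_ ?_ ?_ ?_ ?_
  · intro a ha
    rw [mem_range]
    exact Fin.lt_def.mp (mem_Iio.mp ha)
  · intro i hi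
    rw [mem_Iio]
    exact Fin.lt_def.mpr (mem_range.mp hi)
  · intro a ha; rfl
  · intro i hi; rfl
  · intro a ha; rfl

lemma sum_ite_le {n : ℕ} (g : ℕ → ℕ) (b : Fin n) :
    ∑ a : Fin n, (if a ≤ b then g ↑a else 0) = ∑ i ∈ range (↑b + 1), g i := by
  rw [← Finset.sum_filter]
  have h : univ.filter (· ≤ b) = Iic b := by ext x; simp
  rw [h, sum_Iic]

lemma sum_ite_lt {n : ℕ} (g : ℕ → ℕ) (b : Fin n) :
    ∑ a : Fin n, (if a < b then g ↑a else 0) = ∑ i ∈ range ↑b, g i := by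
  rw [← Finset.sum_filter]
  have h : univ.filter (· < b) = Iio b := by ext x; simp
  rw [h, sum_Iio]

lemma cardT (n : ℕ) :
    ((univ : Finset (Fin n × Fin n)).filter (fun p => p.2 ≤ p.1)).card = W2 n := by
  rw [Finset.card_filter, Fintype.sum_prod_type]
  have h1 : ∀ x : Fin n, (∑ y : Fin n, if y ≤ x then 1 else 0) = (x : ℕ) + 1 := by
    intro x
    rw [sum_ite_le (fun _ => 1) x]
    simp
  rw [Finset.sum_congr rfl fun x _ => h1 x, Fin.sum_univ_eq_sum_range (fun i => i + 1)]
  rfl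

lemma sum_range_W2 (m : ℕ) : ∑ i ∈ range (m + 1), W2 i = W3 m := by
  rw [Finset.sum_range_succ']
  simp [W3, W2]

lemma cardP4 (n : ℕ) :
    ((univ : Finset (Fin n × Fin n × Fin n × Fin n)).filter
      (fun p => p.2.1 ≤ p.1 ∧ p.2.2.1 ≤ p.2.1 ∧ p.2.2.2 ≤ p.2.2.1)).card = W4 n := by
  rw [Finset.card_filter]
  simp only [Fintype.sum_prod_type, ite_and, sum_if_const]
  have h1 : ∀ a : Fin n, (∑ y : Fin n, if y ≤ a then (1:ℕ) else 0) = (a:ℕ) + 1 := by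
    intro a; rw [sum_ite_le (fun _ => 1) a]; simp
  simp only [h1]
  have h2 : ∀ b : Fin n, (∑ a : Fin n, if a ≤ b then ((a:ℕ) + 1) else 0) = W2 ((b:ℕ) + 1) := by
    intro b; rw [sum_ite_le (fun i => i + 1) b]; rfl
  simp only [h2]
  have h3 : ∀ c : Fin n, (∑ b : Fin n, if b ≤ c then W2 ((b:ℕ) + 1) else 0) = W3 ((c:ℕ) + 1) := by
    intro c; rw [sum_ite_le (fun i => W2 (i + 1)) c]; rfl
  simp only [h3]
  rw [Fin.sum_univ_eq_sum_range (fun i => W3 (i + 1))]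
  rfl

lemma cardQ4 (n : ℕ) :
    ((univ : Finset (Fin n × Fin n × Fin n × Fin n)).filter
      (fun p => p.2.1 ≤ p.1 ∧ p.2.2.1 < p.2.1 ∧ p.2.2.2 ≤ p.2.2.1)).card = S4' n := by
  rw [Finset.card_filter]
  simp only [Fintype.sum_prod_type, ite_and, sum_if_const]
  have h1 : ∀ a : Fin n, (∑ y : Fin n, if y ≤ a then (1:ℕ) else 0) = (a:ℕ) + 1 := by
    intro a; rw [sum_ite_le (fun _ => 1) a]; simp
  simp only [h1]
  have h2 : ∀ b : Fin n, (∑ a : Fin n, if a < b then ((a:ℕ) + 1) else 0) = W2 (b:ℕ) := by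
    intro b; rw [sum_ite_lt (fun i => i + 1) b]; rfl
  simp only [h2]
  have h3 : ∀ c : Fin n, (∑ b : Fin n, if b ≤ c then W2 (b:ℕ) else 0) = W3 (c:ℕ) := by
    intro c; rw [sum_ite_le (fun i => W2 i) c, sum_range_W2]
  simp only [h3]
  rw [Fin.sum_univ_eq_sum_range (fun i => W3 i)]
  rfl



lemma W2_mul (n : ℕ) : 2 * W2 n = n * (n + 1) := by
  induction n with
  | zero => simp [W2]
  | succ m ih => simp only [W2, sum_range_succ] at *; nlinarith [ih]

lemma W3_mul (n : ℕ) : 6 * W3 n = n * (n + 1) * (n + 2) := by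
  induction n with
  | zero => simp [W3]
  | succ m ih =>
    simp only [W3, sum_range_succ] at *
    have h2 := W2_mul (m + 1)
    nlinarith [ih, h2]

lemma W4_mul (n : ℕ) : 24 * W4 n = n * (n + 1) * (n + 2) * (n + 3) := by
  induction n with
  | zero => simp [W4]
  | succ m ih =>
    simp only [W4, sum_range_succ] at *
    have h3 := W3_mul (m + 1)
    nlinarith [ih, h3]

lemma S4'_mul (n : ℕ) : 24 * S4' (n + 1) = n * (n + 1) * (n + 2) * (n + 3) := by
  induction n with
  | zero => simp [S4', W3]
  | succ m ih =>
    have : S4' (m + 1 + 1) = S4' (m + 1) + W3 (m + 1) := by simp [S4', sum_range_succ]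
    rw [this]
    have h3 := W3_mul (m + 1)
    nlinarith [ih, h3]

lemma W3_eq_sum (m : ℕ) : ∑ i ∈ range (m + 1), W2 i = W3 m := by
  rw [Finset.sum_range_succ']; simp [W3, W2]

lemma choose2 (n : ℕ) : 2 * (n + 2).choose 2 = (n + 1) * (n + 2) := by
  induction n with
  | zero => decide
  | succ m ih => rw [Nat.choose_succ_succ (m + 2) 1]; simp [Nat.choose_one_right] at *; ring_nf at *; omega

lemma choose3 (n : ℕ) : 6 * (n + 2).choose 3 = n * (n + 1) * (n + 2) := by
  induction n with
  | zero => decide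
  | succ m ih =>
    rw [Nat.choose_succ_succ (m + 2) 2]
    have h2 := choose2 m
    nlinarith [ih, h2]

def IsIntervalClosed {P : Type*} [PartialOrder P] (I : Finset P) : Prop :=
  ∀ x ∈ I, ∀ y ∈ I, ∀ z : P, x < z → z < y → z ∈ I

namespace ICS
variable {n : ℕ}

def row (i : Fin 2) (a b : Fin n) : Finset (Fin 2 × Fin n) :=
  (Finset.Icc a b).image (fun c => (i, c))

lemma mem_row {i j : Fin 2} {a b c : Fin n} :
    (j, c) ∈ row i a b ↔ j = i ∧ a ≤ c ∧ c ≤ b := by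
  simp only [row, Finset.mem_image, Finset.mem_Icc, Prod.mk.injEq]
  constructor
  · rintro ⟨x, ⟨h1, h2⟩, rfl, rfl⟩; exact ⟨rfl, h1, h2⟩
  · rintro ⟨rfl, h1, h2⟩; exact ⟨c, ⟨h1, h2⟩, rfl, rfl⟩

lemma plt {x y : Fin 2 × Fin n} :
    x < y ↔ ((x.1 : ℕ) < (y.1 : ℕ) ∧ (x.2 : ℕ) ≤ (y.2 : ℕ)) ∨
      ((x.1 : ℕ) ≤ (y.1 : ℕ) ∧ (x.2 : ℕ) < (y.2 : ℕ)) := by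
  rw [Prod.lt_iff]
  simp only [Fin.lt_def, Fin.le_def]

lemma ics_empty : IsIntervalClosed (∅ : Finset (Fin 2 × Fin n)) := by
  intro x hx; simp at hx

lemma ics_row (i : Fin 2) (a b : Fin n) : IsIntervalClosed (row i a b) := by
  rintro ⟨x1, x2⟩ hx ⟨y1, y2⟩ hy ⟨z1, z2⟩ hxz hzy
  rw [mem_row] at hx hy ⊢
  rw [plt] at hxz hzy
  obtain ⟨rfl, hx2, hx3⟩ := hx
  obtain ⟨rfl, hy2, hy3⟩ := hy
  rw [Fin.le_def] at hx2 hx3 hy2 hy3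
  refine ⟨Fin.ext ?_, Fin.le_def.mpr ?_, Fin.le_def.mpr ?_⟩ <;> simp at hxz hzy <;> omega

lemma ics_union (a1 a2 b1 b2 : Fin n) (ha : a1 ≤ a2) (hb : b1 ≤ b2)
    (hcomp : (b1 ≤ a1 ∧ a1 ≤ b2 ∧ b2 ≤ a2) ∨ b2 < a1) :
    IsIntervalClosed (row 0 a1 a2 ∪ row 1 b1 b2) := by
  rintro ⟨x1, x2⟩ hx ⟨y1, y2⟩ hy ⟨z1, z2⟩ hxz hzy
  simp only [Finset.mem_union, mem_row] at hx hy ⊢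
  rw [plt] at hxz hzy
  simp only [Fin.ext_iff, Fin.le_def, Fin.lt_def,
    show ((0 : Fin 2) : ℕ) = 0 from rfl, show ((1 : Fin 2) : ℕ) = 1 from rfl] at hx hy ha hb hcomp ⊢
  have h1 := x1.isLt
  have h2 := y1.isLt
  have h3 := z1.isLt
  simp only at hxz hzy
  omega

def f1 (p : Fin n × Fin n) : Finset (Fin 2 × Fin n) := row 0 p.2 p.1
def f2 (p : Fin n × Fin n) : Finset (Fin 2 × Fin n) := row 1 p.2 p.1
/-- p = (a2, b2, a1, b1), cond `b2≤a2 ∧ a1≤b2 ∧ b1≤a1` -/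
def f3 (p : Fin n × Fin n × Fin n × Fin n) : Finset (Fin 2 × Fin n) :=
  row 0 p.2.2.1 p.1 ∪ row 1 p.2.2.2 p.2.1
/-- p = (a2, a1, b2, b1), cond `a1≤a2 ∧ b2<a1 ∧ b1≤b2` -/
def f4 (p : Fin n × Fin n × Fin n × Fin n) : Finset (Fin 2 × Fin n) :=
  row 0 p.2.1 p.1 ∪ row 1 p.2.2.2 p.2.2.1

def T (n : ℕ) : Finset (Fin n × Fin n) := univ.filter (fun p => p.2 ≤ p.1)
def P4 (n : ℕ) : Finset (Fin n × Fin n × Fin n × Fin n) :=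
  univ.filter (fun p => p.2.1 ≤ p.1 ∧ p.2.2.1 ≤ p.2.1 ∧ p.2.2.2 ≤ p.2.2.1)
def Q4 (n : ℕ) : Finset (Fin n × Fin n × Fin n × Fin n) :=
  univ.filter (fun p => p.2.1 ≤ p.1 ∧ p.2.2.1 < p.2.1 ∧ p.2.2.2 ≤ p.2.2.1)

def S (n : ℕ) : Finset (Finset (Fin 2 × Fin n)) :=
  insert ∅ ((((T n).image f1 ∪ (T n).image f2) ∪ (P4 n).image f3) ∪ (Q4 n).image f4)

lemma mem_S_forward (I : Finset (Fin 2 × Fin n)) (h : IsIntervalClosed I) : I ∈ S n := by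
  classical
  set A : Finset (Fin n) := (I.filter (fun p => p.1 = 0)).image Prod.snd with hAdef
  set B : Finset (Fin n) := (I.filter (fun p => p.1 = 1)).image Prod.snd with hBdef
  have hA : ∀ c : Fin n, c ∈ A ↔ (0, c) ∈ I := by
    intro c
    simp only [hAdef, Finset.mem_image, Finset.mem_filter]
    constructor
    · rintro ⟨⟨p1, p2⟩, ⟨hpI, hp1⟩, rfl⟩
      simp only at hp1
      subst hp1; exact hpI
    · intro hc; exact ⟨(0, c), ⟨hc, rfl⟩, rfl⟩
  have hB : ∀ c : Fin n, c ∈ B ↔ (1, c) ∈ I := by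
    intro c
    simp only [hBdef, Finset.mem_image, Finset.mem_filter]
    constructor
    · rintro ⟨⟨p1, p2⟩, ⟨hpI, hp1⟩, rfl⟩
      simp only at hp1
      subst hp1; exact hpI
    · intro hc; exact ⟨(1, c), ⟨hc, rfl⟩, rfl⟩
  have memAB : ∀ p : Fin 2 × Fin n, p ∈ I ↔ (p.1 = 0 ∧ p.2 ∈ A) ∨ (p.1 = 1 ∧ p.2 ∈ B) := by
    rintro ⟨p1, p2⟩
    have h2 : p1 = 0 ∨ p1 = 1 := by omega
    rcases h2 with rfl | rfl
    · simp [hA, hB]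
    · simp [hA, hB]
  have key : ∀ i : Fin 2, ∀ a c b : Fin n, (i, a) ∈ I → (i, b) ∈ I → a ≤ c → c ≤ b →
      (i, c) ∈ I := by
    intro i a c b hai hbi hac hcb
    rcases eq_or_lt_of_le hac with rfl | h1
    · exact hai
    rcases eq_or_lt_of_le hcb with rfl | h2
    · exact hbi
    exact h (i, a) hai (i, b) hbi (i, c) (by rw [plt]; right; exact ⟨le_refl _, h1⟩)
      (by rw [plt]; right; exact ⟨le_refl _, h2⟩)
  have cross1 : ∀ a b c : Fin n, (0, a) ∈ I → (1, b) ∈ I → a < c → c ≤ b → (0, c) ∈ I := by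
    intro a b c ha' hb' h1 h2
    exact h (0, a) ha' (1, b) hb' (0, c) (by rw [plt]; right; exact ⟨le_refl _, h1⟩)
      (by rw [plt]; left; exact ⟨Nat.zero_lt_one, h2⟩)
  have cross2 : ∀ a b c : Fin n, (0, a) ∈ I → (1, b) ∈ I → a ≤ c → c < b → (1, c) ∈ I := by
    intro a b c ha' hb' h1 h2
    exact h (0, a) ha' (1, b) hb' (1, c) (by rw [plt]; left; exact ⟨Nat.zero_lt_one, h1⟩)
      (by rw [plt]; right; exact ⟨le_refl _, h2⟩)
  rcases A.eq_empty_or_nonempty with hAe | hAne <;> rcases B.eq_empty_or_nonempty with hBe | hBne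
  · -- both empty : I = ∅
    have : I = ∅ := by
      ext p
      simp only [Finset.notMem_empty, iff_false]
      intro hp
      rcases (memAB p).mp hp with ⟨_, h2⟩ | ⟨_, h2⟩
      · rw [hAe] at h2; exact absurd h2 (Finset.notMem_empty _)
      · rw [hBe] at h2; exact absurd h2 (Finset.notMem_empty _)
    rw [this, S]; exact Finset.mem_insert_self _ _
  · -- A empty, B nonempty
    have hI : I = f2 (B.max' hBne, B.min' hBne) := by
      ext ⟨p1, p2⟩
      rw [f2, mem_row, memAB]
      constructor
      · rintro (⟨_, h2⟩ | ⟨h1, h2⟩)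
        · rw [hAe] at h2; exact absurd h2 (Finset.notMem_empty _)
        · exact ⟨h1, B.min'_le _ h2, B.le_max' _ h2⟩
      · rintro ⟨rfl, h1, h2⟩
        right
        refine ⟨rfl, (hB _).mpr ?_⟩
        exact key 1 _ _ _ ((hB _).mp (B.min'_mem hBne)) ((hB _).mp (B.max'_mem hBne)) h1 h2
    rw [hI, S]
    apply Finset.mem_insert_of_mem
    apply Finset.mem_union_left; apply Finset.mem_union_left; apply Finset.mem_union_right
    exact Finset.mem_image_of_mem _ (by simp [T, B.min'_le _ (B.max'_mem hBne)])
  · -- A nonempty, B empty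
    have hI : I = f1 (A.max' hAne, A.min' hAne) := by
      ext ⟨p1, p2⟩
      rw [f1, mem_row, memAB]
      constructor
      · rintro (⟨h1, h2⟩ | ⟨_, h2⟩)
        · exact ⟨h1, A.min'_le _ h2, A.le_max' _ h2⟩
        · rw [hBe] at h2; exact absurd h2 (Finset.notMem_empty _)
      · rintro ⟨rfl, h1, h2⟩
        left
        refine ⟨rfl, (hA _).mpr ?_⟩
        exact key 0 _ _ _ ((hA _).mp (A.min'_mem hAne)) ((hA _).mp (A.max'_mem hAne)) h1 h2
    rw [hI, S]
    apply Finset.mem_insert_of_mem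
    apply Finset.mem_union_left; apply Finset.mem_union_left; apply Finset.mem_union_left
    exact Finset.mem_image_of_mem _ (by simp [T, A.min'_le _ (A.max'_mem hAne)])
  · -- both nonempty
    set mA := A.min' hAne
    set MA := A.max' hAne
    set mB := B.min' hBne
    set MB := B.max' hBne
    have hmA : (0, mA) ∈ I := (hA _).mp (A.min'_mem hAne)
    have hMA : (0, MA) ∈ I := (hA _).mp (A.max'_mem hAne)
    have hmB : (1, mB) ∈ I := (hB _).mp (B.min'_mem hBne)
    have hMB : (1, MB) ∈ I := (hB _).mp (B.max'_mem hBne)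
    have hI : I = row 0 mA MA ∪ row 1 mB MB := by
      ext ⟨p1, p2⟩
      rw [Finset.mem_union, mem_row, mem_row, memAB]
      constructor
      · rintro (⟨h1, h2⟩ | ⟨h1, h2⟩)
        · exact Or.inl ⟨h1, A.min'_le _ h2, A.le_max' _ h2⟩
        · exact Or.inr ⟨h1, B.min'_le _ h2, B.le_max' _ h2⟩
      · rintro (⟨rfl, h1, h2⟩ | ⟨rfl, h1, h2⟩)
        · exact Or.inl ⟨rfl, (hA _).mpr (key 0 _ _ _ hmA hMA h1 h2)⟩
        · exact Or.inr ⟨rfl, (hB _).mpr (key 1 _ _ _ hmB hMB h1 h2)⟩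
    by_cases hcase : mA ≤ MB
    · -- f3 case
      have c1 : mB ≤ mA := by
        rcases eq_or_lt_of_le hcase with heq | hlt
        · rw [heq]; exact B.min'_le _ (B.max'_mem hBne)
        · exact B.min'_le _ ((hB _).mpr (cross2 mA MB mA hmA hMB (le_refl _) hlt))
      have c2 : MB ≤ MA := by
        rcases eq_or_lt_of_le hcase with heq | hlt
        · rw [← heq]; exact A.le_max' _ (A.min'_mem hAne)
        · exact A.le_max' _ ((hA _).mpr (cross1 mA MB MB hmA hMB hlt (le_refl _)))
      have hI3 : I = f3 (MA, MB, mA, mB) := by rw [hI]; rfl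
      rw [hI3, S]
      apply Finset.mem_insert_of_mem
      apply Finset.mem_union_left; apply Finset.mem_union_right
      exact Finset.mem_image_of_mem _ (by simp [P4, c1, c2, hcase])
    · -- f4 case
      push_neg at hcase
      have hI4 : I = f4 (MA, mA, MB, mB) := by rw [hI]; rfl
      rw [hI4, S]
      apply Finset.mem_insert_of_mem
      apply Finset.mem_union_right
      exact Finset.mem_image_of_mem _
        (by simp [Q4, hcase, A.min'_le _ (A.max'_mem hAne), B.min'_le _ (B.max'_mem hBne)]
            exact ⟨A.min'_le _ (A.max'_mem hAne), B.min'_le _ (B.max'_mem hBne)⟩)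


lemma mem_S_backward (I : Finset (Fin 2 × Fin n)) (hI : I ∈ S n) : IsIntervalClosed I := by
  simp only [S, Finset.mem_insert, Finset.mem_union, Finset.mem_image] at hI
  rcases hI with rfl | (((⟨p, hp, rfl⟩ | ⟨p, hp, rfl⟩) | ⟨p, hp, rfl⟩) | ⟨p, hp, rfl⟩)
  · exact ics_empty
  · exact ics_row _ _ _
  · exact ics_row _ _ _
  · simp only [P4, Finset.mem_filter] at hp
    obtain ⟨-, h1, h2, h3⟩ := hp
    exact ics_union _ _ _ _ (le_trans h2 h1) (le_trans h3 h2)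
      (Or.inl ⟨h3, h2, h1⟩)
  · simp only [Q4, Finset.mem_filter] at hp
    obtain ⟨-, h1, h2, h3⟩ := hp
    exact ics_union _ _ _ _ h1 h3 (Or.inr h2)

/-- recover bounds of the 0-row from a union set -/
lemma row0_bounds {a1 a2 b1 b2 c : Fin n} (hc : (0, c) ∈ row 0 a1 a2 ∪ row 1 b1 b2) :
    a1 ≤ c ∧ c ≤ a2 := by
  rcases Finset.mem_union.mp hc with h | h
  · exact (mem_row.mp h).2
  · exact absurd (mem_row.mp h).1 (by decide)

lemma row1_bounds {a1 a2 b1 b2 c : Fin n} (hc : (1, c) ∈ row 0 a1 a2 ∪ row 1 b1 b2) :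
    b1 ≤ c ∧ c ≤ b2 := by
  rcases Finset.mem_union.mp hc with h | h
  · exact absurd (mem_row.mp h).1 (by decide)
  · exact (mem_row.mp h).2

lemma row_eq_iff {a1 a2 a1' a2' : Fin n} {i : Fin 2} (h1 : a1 ≤ a2) (h1' : a1' ≤ a2')
    (heq : row i a1 a2 = row i a1' a2') : a1 = a1' ∧ a2 = a2' := by
  have m1 : (i, a1) ∈ row i a1' a2' := heq ▸ mem_row.mpr ⟨rfl, le_refl _, h1⟩
  have m2 : (i, a2) ∈ row i a1' a2' := heq ▸ mem_row.mpr ⟨rfl, h1, le_refl _⟩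
  have m1' : (i, a1') ∈ row i a1 a2 := heq.symm ▸ mem_row.mpr ⟨rfl, le_refl _, h1'⟩
  have m2' : (i, a2') ∈ row i a1 a2 := heq.symm ▸ mem_row.mpr ⟨rfl, h1', le_refl _⟩
  rw [mem_row] at m1 m2 m1' m2'
  exact ⟨le_antisymm m1'.2.1 m1.2.1, le_antisymm m2.2.2 m2'.2.2⟩

lemma union_eq_iff {a1 a2 b1 b2 a1' a2' b1' b2' : Fin n}
    (h1 : a1 ≤ a2) (h2 : b1 ≤ b2) (h1' : a1' ≤ a2') (h2' : b1' ≤ b2')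
    (heq : row 0 a1 a2 ∪ row 1 b1 b2 = row 0 a1' a2' ∪ row 1 b1' b2') :
    a1 = a1' ∧ a2 = a2' ∧ b1 = b1' ∧ b2 = b2' := by
  have m1 := row0_bounds (heq ▸ Finset.mem_union_left _ (mem_row.mpr ⟨rfl, le_refl _, h1⟩))
  have m2 := row0_bounds (heq ▸ Finset.mem_union_left _ (mem_row.mpr ⟨rfl, h1, le_refl _⟩))
  have m3 := row1_bounds (heq ▸ Finset.mem_union_right _ (mem_row.mpr ⟨rfl, le_refl _, h2⟩))
  have m4 := row1_bounds (heq ▸ Finset.mem_union_right _ (mem_row.mpr ⟨rfl, h2, le_refl _⟩))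
  have m1' := row0_bounds (heq.symm ▸ Finset.mem_union_left (α := Fin 2 × Fin n) _
    (mem_row.mpr ⟨rfl, le_refl _, h1'⟩))
  have m2' := row0_bounds (heq.symm ▸ Finset.mem_union_left (α := Fin 2 × Fin n) _
    (mem_row.mpr ⟨rfl, h1', le_refl _⟩))
  have m3' := row1_bounds (heq.symm ▸ Finset.mem_union_right (α := Fin 2 × Fin n) _
    (mem_row.mpr ⟨rfl, le_refl _, h2'⟩))
  have m4' := row1_bounds (heq.symm ▸ Finset.mem_union_right (α := Fin 2 × Fin n) _
    (mem_row.mpr ⟨rfl, h2', le_refl _⟩))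
  exact ⟨le_antisymm m1'.1 m1.1, le_antisymm m2.2 m2'.2, le_antisymm m3'.1 m3.1, le_antisymm m4.2 m4'.2⟩

lemma T_le {p : Fin n × Fin n} (hp : p ∈ T n) : p.2 ≤ p.1 := (Finset.mem_filter.mp hp).2

lemma P4_le {p : Fin n × Fin n × Fin n × Fin n} (hp : p ∈ P4 n) :
    p.2.1 ≤ p.1 ∧ p.2.2.1 ≤ p.2.1 ∧ p.2.2.2 ≤ p.2.2.1 := (Finset.mem_filter.mp hp).2

lemma Q4_le {p : Fin n × Fin n × Fin n × Fin n} (hp : p ∈ Q4 n) :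
    p.2.1 ≤ p.1 ∧ p.2.2.1 < p.2.1 ∧ p.2.2.2 ≤ p.2.2.1 := (Finset.mem_filter.mp hp).2

lemma mem_f1 {p : Fin n × Fin n} (hp : p ∈ T n) : (0, p.2) ∈ f1 p :=
  mem_row.mpr ⟨rfl, le_refl _, T_le hp⟩

lemma mem_f2 {p : Fin n × Fin n} (hp : p ∈ T n) : (1, p.2) ∈ f2 p :=
  mem_row.mpr ⟨rfl, le_refl _, T_le hp⟩

lemma f1_fst {p : Fin n × Fin n} {i : Fin 2} {c : Fin n} (h : (i, c) ∈ f1 p) : i = 0 :=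
  (mem_row.mp h).1

lemma f2_fst {p : Fin n × Fin n} {i : Fin 2} {c : Fin n} (h : (i, c) ∈ f2 p) : i = 1 :=
  (mem_row.mp h).1

lemma mem_f3_0 {p : Fin n × Fin n × Fin n × Fin n} (hp : p ∈ P4 n) : (0, p.2.2.1) ∈ f3 p := by
  obtain ⟨h1, h2, h3⟩ := P4_le hp
  exact Finset.mem_union_left _ (mem_row.mpr ⟨rfl, le_refl _, le_trans h2 h1⟩)

lemma mem_f3_1 {p : Fin n × Fin n × Fin n × Fin n} (hp : p ∈ P4 n) : (1, p.2.2.2) ∈ f3 p := by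
  obtain ⟨h1, h2, h3⟩ := P4_le hp
  exact Finset.mem_union_right _ (mem_row.mpr ⟨rfl, le_refl _, le_trans h3 h2⟩)

lemma mem_f4_0 {p : Fin n × Fin n × Fin n × Fin n} (hp : p ∈ Q4 n) : (0, p.2.1) ∈ f4 p := by
  obtain ⟨h1, h2, h3⟩ := Q4_le hp
  exact Finset.mem_union_left _ (mem_row.mpr ⟨rfl, le_refl _, h1⟩)

lemma mem_f4_1 {p : Fin n × Fin n × Fin n × Fin n} (hp : p ∈ Q4 n) : (1, p.2.2.2) ∈ f4 p := by
  obtain ⟨h1, h2, h3⟩ := Q4_le hp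
  exact Finset.mem_union_right _ (mem_row.mpr ⟨rfl, le_refl _, h3⟩)

lemma card_S (n : ℕ) : (S n).card = 1 + (W2 n + W2 n + W4 n + S4' n) := by
  classical
  have inj1 : Set.InjOn f1 ((T n : Finset (Fin n × Fin n)) : Set (Fin n × Fin n)) := by
    intro p hp q hq heq
    obtain ⟨e1, e2⟩ := row_eq_iff (T_le hp) (T_le hq) heq
    exact Prod.ext e2 e1
  have inj2 : Set.InjOn f2 ((T n : Finset (Fin n × Fin n)) : Set (Fin n × Fin n)) := by
    intro p hp q hq heq
    obtain ⟨e1, e2⟩ := row_eq_iff (T_le hp) (T_le hq) heq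
    exact Prod.ext e2 e1
  have inj3 : Set.InjOn f3 ((P4 n : Finset (Fin n × Fin n × Fin n × Fin n)) : Set (Fin n × Fin n × Fin n × Fin n)) := by
    intro p hp q hq heq
    obtain ⟨h1, h2, h3⟩ := P4_le hp
    obtain ⟨h1', h2', h3'⟩ := P4_le hq
    obtain ⟨e1, e2, e3, e4⟩ := union_eq_iff (le_trans h2 h1) (le_trans h3 h2)
      (le_trans h2' h1') (le_trans h3' h2') heq
    exact Prod.ext e2 (Prod.ext e4 (Prod.ext e1 e3))
  have inj4 : Set.InjOn f4 ((Q4 n : Finset (Fin n × Fin n × Fin n × Fin n)) : Set (Fin n × Fin n × Fin n × Fin n)) := by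
    intro p hp q hq heq
    obtain ⟨h1, h2, h3⟩ := Q4_le hp
    obtain ⟨h1', h2', h3'⟩ := Q4_le hq
    obtain ⟨e1, e2, e3, e4⟩ := union_eq_iff h1 h3 h1' h3' heq
    exact Prod.ext e2 (Prod.ext e1 (Prod.ext e4 e3))
  have d12 : Disjoint ((T n).image f1) ((T n).image f2) := by
    rw [Finset.disjoint_left]
    intro s hs hs'
    obtain ⟨p, hp, rfl⟩ := Finset.mem_image.mp hs
    obtain ⟨q, hq, heq⟩ := Finset.mem_image.mp hs'
    have := mem_f1 hp
    rw [← heq] at this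
    exact absurd (f2_fst this) (by decide)
  have d13 : Disjoint ((T n).image f1) ((P4 n).image f3) := by
    rw [Finset.disjoint_left]
    intro s hs hs'
    obtain ⟨p, hp, rfl⟩ := Finset.mem_image.mp hs
    obtain ⟨q, hq, heq⟩ := Finset.mem_image.mp hs'
    have := mem_f3_1 hq
    rw [heq] at this
    exact absurd (f1_fst this) (by decide)
  have d23 : Disjoint ((T n).image f2) ((P4 n).image f3) := by
    rw [Finset.disjoint_left]
    intro s hs hs'
    obtain ⟨p, hp, rfl⟩ := Finset.mem_image.mp hs
    obtain ⟨q, hq, heq⟩ := Finset.mem_image.mp hs'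
    have := mem_f3_0 hq
    rw [heq] at this
    exact absurd (f2_fst this) (by decide)
  have d14 : Disjoint ((T n).image f1) ((Q4 n).image f4) := by
    rw [Finset.disjoint_left]
    intro s hs hs'
    obtain ⟨p, hp, rfl⟩ := Finset.mem_image.mp hs
    obtain ⟨q, hq, heq⟩ := Finset.mem_image.mp hs'
    have := mem_f4_1 hq
    rw [heq] at this
    exact absurd (f1_fst this) (by decide)
  have d24 : Disjoint ((T n).image f2) ((Q4 n).image f4) := by
    rw [Finset.disjoint_left]
    intro s hs hs'
    obtain ⟨p, hp, rfl⟩ := Finset.mem_image.mp hs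
    obtain ⟨q, hq, heq⟩ := Finset.mem_image.mp hs'
    have := mem_f4_0 hq
    rw [heq] at this
    exact absurd (f2_fst this) (by decide)
  have d34 : Disjoint ((P4 n).image f3) ((Q4 n).image f4) := by
    rw [Finset.disjoint_left]
    intro s hs hs'
    obtain ⟨p, hp, rfl⟩ := Finset.mem_image.mp hs
    obtain ⟨q, hq, heq⟩ := Finset.mem_image.mp hs'
    obtain ⟨h1, h2, h3⟩ := P4_le hp
    obtain ⟨h1', h2', h3'⟩ := Q4_le hq
    obtain ⟨e1, e2, e3, e4⟩ := union_eq_iff (le_trans h2 h1) (le_trans h3 h2) h1' h3'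
      heq.symm
    have : p.2.2.1 ≤ p.2.1 := h2
    rw [e1, e4] at this
    exact absurd h2' (not_lt.mpr this)
  have hne : (∅ : Finset (Fin 2 × Fin n)) ∉
      (((T n).image f1 ∪ (T n).image f2) ∪ (P4 n).image f3) ∪ (Q4 n).image f4 := by
    simp only [Finset.mem_union, Finset.mem_image]
    rintro (((⟨p, hp, heq⟩ | ⟨p, hp, heq⟩) | ⟨p, hp, heq⟩) | ⟨p, hp, heq⟩)
    · exact absurd (heq ▸ mem_f1 hp) (Finset.notMem_empty _)
    · exact absurd (heq ▸ mem_f2 hp) (Finset.notMem_empty _)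
    · exact absurd (heq ▸ mem_f3_0 hp) (Finset.notMem_empty _)
    · exact absurd (heq ▸ mem_f4_0 hp) (Finset.notMem_empty _)
  rw [S, Finset.card_insert_of_notMem hne]
  rw [Finset.card_union_of_disjoint (by
    refine Finset.disjoint_union_left.mpr ⟨Finset.disjoint_union_left.mpr ⟨d14, d24⟩, d34⟩)]
  rw [Finset.card_union_of_disjoint (Finset.disjoint_union_left.mpr ⟨d13, d23⟩)]
  rw [Finset.card_union_of_disjoint d12]
  rw [Finset.card_image_of_injOn inj1, Finset.card_image_of_injOn inj2,
    Finset.card_image_of_injOn inj3, Finset.card_image_of_injOn inj4]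
  have e1 : (T n).card = W2 n := cardT n
  have e2 : (P4 n).card = W4 n := cardP4 n
  have e3 : (Q4 n).card = S4' n := cardQ4 n
  omega

end ICS

instance (n : ℕ) : DecidableRel ((· < ·) : Fin 2 × Fin n → Fin 2 × Fin n → Prop) :=
  fun _ _ => decidable_of_iff _ Prod.lt_iff.symm

instance (n : ℕ) : DecidablePred (IsIntervalClosed (P := Fin 2 × Fin n)) := by
  intro I; unfold IsIntervalClosed; infer_instance

/-- The number of interval-closed sets of `[2] × [n]` is
`1 + n + n² + ((n+1)/2)·C(n+2,3) = (n⁴ + 4n³ + 17n² + 14n + 12)/12`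
(both identities stated with denominators cleared). -/
theorem card_ics_two_times_n (n : ℕ) :
    12 * Nat.card {I : Finset (Fin 2 × Fin n) // IsIntervalClosed I} =
        n ^ 4 + 4 * n ^ 3 + 17 * n ^ 2 + 14 * n + 12 ∧
      2 * Nat.card {I : Finset (Fin 2 × Fin n) // IsIntervalClosed I} =
        2 * (1 + n + n ^ 2) + (n + 1) * (n + 2).choose 3 := by
  have hcard : Nat.card {I : Finset (Fin 2 × Fin n) // IsIntervalClosed I}
      = 1 + (W2 n + W2 n + W4 n + S4' n) := by
    rw [Nat.card_eq_fintype_card, Fintype.card_subtype]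
    have hS : (univ.filter (fun I : Finset (Fin 2 × Fin n) => IsIntervalClosed I)) = ICS.S n := by
      ext I
      simp only [Finset.mem_filter, Finset.mem_univ, true_and]
      exact ⟨ICS.mem_S_forward I, ICS.mem_S_backward I⟩
    rw [hS, ICS.card_S]
  set C := Nat.card {I : Finset (Fin 2 × Fin n) // IsIntervalClosed I} with hC
  have key : 24 * C = 2 * (n ^ 4 + 4 * n ^ 3 + 17 * n ^ 2 + 14 * n + 12) := by
    cases n with
    | zero =>
      rw [hcard]
      norm_num [W2, W4, S4']
    | succ m =>
      have a := W2_mul (m + 1)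
      have b := W4_mul (m + 1)
      have c := S4'_mul m
      have expand : 24 * C = 24 + 24 * (2 * W2 (m + 1)) + 24 * W4 (m + 1) + 24 * S4' (m + 1) := by
        rw [hcard]; ring
      rw [expand, a, b, c]
      ring
  constructor
  · have h2 : 2 * (12 * C) = 2 * (n ^ 4 + 4 * n ^ 3 + 17 * n ^ 2 + 14 * n + 12) := by
      rw [← key]; ring
    exact Nat.eq_of_mul_eq_mul_left (by norm_num) h2
  · have h6 := choose3 n
    have h12 : 12 * (2 * C) = 12 * (2 * (1 + n + n ^ 2) + (n + 1) * (n + 2).choose 3) :=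
      calc 12 * (2 * C) = 24 * C := by ring
        _ = 2 * (n ^ 4 + 4 * n ^ 3 + 17 * n ^ 2 + 14 * n + 12) := key
        _ = 24 * (1 + n + n ^ 2) + 2 * ((n + 1) * (n * (n + 1) * (n + 2))) := by ring
        _ = 24 * (1 + n + n ^ 2) + 2 * ((n + 1) * (6 * (n + 2).choose 3)) := by rw [h6]
        _ = 12 * (2 * (1 + n + n ^ 2) + (n + 1) * (n + 2).choose 3) := by ring
    exact Nat.eq_of_mul_eq_mul_left (by norm_num) h12
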